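/- arXiv:1804.08115 — 3 statements merged into one kernel-verified Lean document; each statement's English description precedes it below -/
import Mathlib

section
/- Let k be a field of characteristic p > 0, let k' be a purely inseparable field extension of k, and let l be a finite separable field extension of k. Then the tensor product k' ⊗_k l is a field. -/
open scoped TensorProduct

open Polynomial

/-- Let `k` be a field of characteristic `p > 0`, let `k'` be a purely
inseparable field extension of `k`, and let `l` be a finite separable field extension of `k`.
Then the tensor product `k' ⊗[k] l` is a field. -/
theorem purelyInseparable_tensor_finite_separable_isField
    (p : ℕ) [Fact p.Prime] (k k' l : Type*) [Field k] [Field k'] [Field l]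
    [Algebra k k'] [Algebra k l] [CharP k p]
    [IsPurelyInseparable k k']
    [FiniteDimensional k l] [Algebra.IsSeparable k l] :
    IsField (k' ⊗[k] l) := by
  obtain ⟨α, hα⟩ := Field.exists_primitive_element k l
  have hint : IsIntegral k α := Algebra.IsIntegral.isIntegral α
  set f : k[X] := minpoly k α with hf
  have hsep : f.Separable := Algebra.IsSeparable.isSeparable k α
  have hirr : Irreducible f := minpoly.irreducible hint
  set g : k'[X] := f.map (algebraMap k k') with hg
  have hgirr : Irreducible g := hsep.map_irreducible_of_isPurelyInseparable k' hirr
  haveI : Fact (Irreducible g) := ⟨hgirr⟩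
  -- the root `1 ⊗ α` kills `g`
  have hroot : Polynomial.eval₂ (Algebra.TensorProduct.includeLeftRingHom :
      k' →+* k' ⊗[k] l) ((1 : k') ⊗ₜ[k] α) g = 0 := by
    rw [hg, Polynomial.eval₂_map]
    have hcomp : (Algebra.TensorProduct.includeLeftRingHom (A := k') (B := l)).comp
        (algebraMap k k') = algebraMap k (k' ⊗[k] l) := by
      ext x
      simp [Algebra.TensorProduct.includeLeftRingHom_apply,
        Algebra.TensorProduct.algebraMap_apply, Algebra.algebraMap_eq_smul_one,
        TensorProduct.smul_tmul, Algebra.TensorProduct.one_def]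
    rw [hcomp]
    calc Polynomial.eval₂ (algebraMap k (k' ⊗[k] l)) ((1 : k') ⊗ₜ[k] α) f
        = Polynomial.aeval ((Algebra.TensorProduct.includeRight :
            l →ₐ[k] k' ⊗[k] l) α) f := rfl
      _ = (Algebra.TensorProduct.includeRight : l →ₐ[k] k' ⊗[k] l)
            (Polynomial.aeval α f) := Polynomial.aeval_algHom_apply _ _ _
      _ = 0 := by rw [hf, minpoly.aeval]; exact map_zero _
  set ψ : AdjoinRoot g →+* k' ⊗[k] l :=
    AdjoinRoot.lift (Algebra.TensorProduct.includeLeftRingHom) ((1 : k') ⊗ₜ[k] α) hroot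
    with hψ
  -- the range of ψ as a k-subalgebra
  have halg : ∀ c : k, algebraMap k (k' ⊗[k] l) c ∈ ψ.range := by
    intro c
    refine ⟨AdjoinRoot.of g (algebraMap k k' c), ?_⟩
    rw [hψ, AdjoinRoot.lift_of]
    simp [Algebra.TensorProduct.includeLeftRingHom_apply,
      Algebra.TensorProduct.algebraMap_apply, Algebra.algebraMap_eq_smul_one,
      TensorProduct.smul_tmul, Algebra.TensorProduct.one_def]
  set S : Subalgebra k (k' ⊗[k] l) :=
    { ψ.range with algebraMap_mem' := halg } with hS
  have hrange : (S : Set (k' ⊗[k] l)) = ψ.range := rfl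
  have hsurj : Function.Surjective ψ := by
    intro x
    suffices h : x ∈ ψ.range by exact h
    have hx : x ∈ S := by
      induction x using TensorProduct.induction_on with
      | zero => exact S.zero_mem
      | add x y hx hy => exact S.add_mem hx hy
      | tmul a b =>
        have ha : a ⊗ₜ[k] (1 : l) ∈ S := by
          refine ⟨AdjoinRoot.of g a, ?_⟩
          rw [hψ, AdjoinRoot.lift_of]
          rfl
        have hb : (1 : k') ⊗ₜ[k] b ∈ S := by
          have htop : Algebra.adjoin k ({α} : Set l) = ⊤ := by
            have := IntermediateField.adjoin_simple_toSubalgebra_of_isAlgebraic hint.isAlgebraic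
            rw [hα] at this
            exact this.symm.trans rfl
          have hb' : b ∈ Algebra.adjoin k ({α} : Set l) := htop ▸ Algebra.mem_top
          have : (Algebra.TensorProduct.includeRight : l →ₐ[k] k' ⊗[k] l) b ∈
              (Algebra.adjoin k ({α} : Set l)).map
                (Algebra.TensorProduct.includeRight : l →ₐ[k] k' ⊗[k] l) :=
            ⟨b, hb', rfl⟩
          rw [AlgHom.map_adjoin] at this
          have hle : Algebra.adjoin k
              ((Algebra.TensorProduct.includeRight : l →ₐ[k] k' ⊗[k] l) '' {α}) ≤ S := by
            rw [Algebra.adjoin_le_iff]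
            rintro _ ⟨y, hy, rfl⟩
            rcases hy with rfl
            refine ⟨AdjoinRoot.root g, ?_⟩
            rw [hψ, AdjoinRoot.lift_root]
            rfl
          exact hle this
        have := S.mul_mem ha hb
        rw [Algebra.TensorProduct.tmul_mul_tmul, mul_one, one_mul] at this
        exact this
    exact hx
  haveI : Nontrivial (k' ⊗[k] l) := inferInstance
  have hinj : Function.Injective ψ := ψ.injective
  exact (RingEquiv.ofBijective ψ ⟨hinj, hsurj⟩).symm.toMulEquiv.isField
    (Field.toIsField (AdjoinRoot g))
end

section
/- Let k be a field of characteristic p > 0 and k' a purely inseparable field extension of k. Then the base-change functor A ↦ A ⊗_k k' from the category of finite étale k-algebras to the category of finite étale k'-algebras is an equivalence of categories. -/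
open scoped TensorProduct
open CategoryTheory Polynomial IntermediateField


universe u

section Decomp

variable (F : Type u) (A : Type u) [Field F] [CommRing A] [Algebra F A]

theorem BCAux.quotFinite (I : Ideal A) [Module.Finite F A] : Module.Finite F (A ⧸ I) :=
  Module.Finite.of_surjective (Ideal.Quotient.mkₐ F I).toLinearMap Ideal.Quotient.mk_surjective

theorem BCAux.quotIsSep [Module.Finite F A] [Algebra.FormallyUnramified F A]
    (I : Ideal A) (hI : I.IsMaximal) :
    letI : Field (A ⧸ I) := Ideal.Quotient.field I
    Algebra.IsSeparable F (A ⧸ I) := by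
  letI : Field (A ⧸ I) := Ideal.Quotient.field I
  haveI : Module.Finite F (A ⧸ I) := BCAux.quotFinite F A I
  haveI : Algebra.EssFiniteType F (A ⧸ I) := Algebra.EssFiniteType.of_finiteType F _
  haveI : Algebra.FormallyUnramified F (A ⧸ I) := Algebra.FormallyUnramified.quotient I
  exact Algebra.FormallyUnramified.isSeparable F (A ⧸ I)

variable [Module.Finite F A] [Algebra.FormallyUnramified F A]

include F in
theorem BCAux.artinian : IsArtinianRing A := by
  have h1 : IsArtinian F A := inferInstance
  exact isArtinian_of_tower F inferInstance

include F in
theorem BCAux.reduced : IsReduced A := by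
  haveI : Algebra.EssFiniteType F A := Algebra.EssFiniteType.of_finiteType F _
  exact Algebra.FormallyUnramified.isReduced_of_field F A

noncomputable def BCAux.decompEquiv :
    haveI := BCAux.artinian F A
    haveI := BCAux.reduced F A
    A ≃ₐ[F] ∀ I : {I : Ideal A | I.IsMaximal}, A ⧸ I.1 := by
  haveI := BCAux.artinian F A
  haveI := BCAux.reduced F A
  exact AlgEquiv.ofRingEquiv (f := (IsArtinianRing.equivPi A).toRingEquiv.trans
    (RingEquiv.piCongrLeft (fun I : {I : Ideal A | I.IsMaximal} => A ⧸ I.1)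
      (({ toFun := fun I => ⟨I.asIdeal, I.isMaximal⟩, invFun := fun I => ⟨I.1, I.2⟩,
          left_inv := fun _ => rfl, right_inv := fun _ => rfl } :
        MaximalSpectrum A ≃ {I : Ideal A | I.IsMaximal}))))
    (fun r => rfl)

theorem BCAux.minpolySep (a : A) : (minpoly F a).Separable := by
  haveI := BCAux.artinian F A
  haveI := BCAux.reduced F A
  haveI := (IsArtinianRing.setOfPred_isMaximal_finite A).to_subtype
  haveI : Fintype {I : Ideal A | I.IsMaximal} := Fintype.ofFinite _
  classical
  rw [← minpoly.algEquiv_eq (BCAux.decompEquiv F A) a]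
  set y := BCAux.decompEquiv F A a with hy
  -- component facts
  haveI : ∀ I : {I : Ideal A | I.IsMaximal}, I.1.IsMaximal := fun I => I.2
  letI instF : ∀ I : {I : Ideal A | I.IsMaximal}, Field (A ⧸ I.1) :=
    fun I => Ideal.Quotient.field I.1
  haveI instSep : ∀ I : {I : Ideal A | I.IsMaximal}, Algebra.IsSeparable F (A ⧸ I.1) :=
    fun I => BCAux.quotIsSep F A I.1 I.2
  have hint : ∀ I : {I : Ideal A | I.IsMaximal}, IsIntegral F (y I) := fun I => by
    haveI := BCAux.quotFinite F A I.1
    exact Algebra.IsIntegral.isIntegral _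
  set 𝒮 : Finset F[X] := Finset.univ.image (fun I : {I : Ideal A | I.IsMaximal} => minpoly F (y I))
    with h𝒮
  have hirr : ∀ g ∈ 𝒮, Irreducible g ∧ g.Monic ∧ g.Separable := by
    intro g hg
    obtain ⟨I, -, rfl⟩ := Finset.mem_image.mp hg
    exact ⟨minpoly.irreducible (hint I), minpoly.monic (hint I),
      Algebra.IsSeparable.isSeparable F _⟩
  have hsep : (∏ g ∈ 𝒮, g).Separable := by
    refine separable_prod' ?_ (fun g hg => (hirr g hg).2.2)
    intro g₁ h₁ g₂ h₂ hne
    refine ((hirr g₁ h₁).1.coprime_iff_not_dvd).mpr (fun hdvd => hne ?_)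
    exact eq_of_monic_of_associated (hirr g₁ h₁).2.1 (hirr g₂ h₂).2.1
      ((hirr g₁ h₁).1.associated_of_dvd (hirr g₂ h₂).1 hdvd)
  have hann : aeval y (∏ g ∈ 𝒮, g) = 0 := by
    funext I
    have : aeval (y I) (∏ g ∈ 𝒮, g) = (aeval y (∏ g ∈ 𝒮, g)) I :=
      aeval_algHom_apply (Pi.evalAlgHom F _ I) y _
    rw [← this, map_prod]
    refine Finset.prod_eq_zero (Finset.mem_image.mpr ⟨I, Finset.mem_univ I, rfl⟩) ?_
    exact minpoly.aeval F (y I)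
  exact hsep.of_dvd (minpoly.dvd F y hann)

end Decomp

theorem BCAux.sepDvdExpandIrred {k : Type u} [Field k] (p : ℕ) [Fact p.Prime] [CharP k p]
    (n : ℕ) (g : k[X]) (hg : Irreducible g) (hsep : g.Separable) :
    ∃ P : k[X], g ∣ ((expand k (p ^ n)) P - X) := by
  haveI : Fact (Irreducible g) := ⟨hg⟩
  set L := AdjoinRoot g
  set t : L := AdjoinRoot.root g
  have hg0 : g ≠ 0 := hg.ne_zero
  have hmin : minpoly k t = g * C g.leadingCoeff⁻¹ := AdjoinRoot.minpoly_root hg0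
  have haev : aeval t g = 0 := by
    rw [AdjoinRoot.aeval_eq]; exact AdjoinRoot.mk_self
  have hdvdg : minpoly k t ∣ g := minpoly.dvd k t haev
  have htsep : IsSeparable k t := hsep.of_dvd hdvdg
  have htint : IsIntegral k t := htsep.isIntegral
  haveI : Algebra.IsSeparable k ↥k⟮t⟯ :=
    (IntermediateField.isSeparable_adjoin_simple_iff_isSeparable k L).2 htsep
  have htop : k⟮t⟯ = ⊤ := by
    apply IntermediateField.toSubalgebra_injective
    rw [IntermediateField.adjoin_simple_toSubalgebra_of_isAlgebraic htint.isAlgebraic,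
      IntermediateField.top_toSubalgebra]
    exact AdjoinRoot.adjoinRoot_eq_top
  haveI : Algebra.IsSeparable k L := by
    have e : L →ₐ[k] ↥k⟮t⟯ := (IntermediateField.equivOfEq htop).symm.toAlgHom.comp
      IntermediateField.topEquiv.symm.toAlgHom
    exact Algebra.IsSeparable.of_algHom k _ e
  have hadj : k⟮t⟯ = k⟮t ^ p ^ n⟯ := by
    have := IntermediateField.adjoin_eq_adjoin_pow_expChar_pow_of_isSeparable' k L {t} p n
    simpa [Set.image_singleton] using this
  have htmem : t ∈ Algebra.adjoin k {t ^ p ^ n} := by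
    have h1 : t ∈ k⟮t ^ p ^ n⟯ := hadj ▸ IntermediateField.mem_adjoin_simple_self k t
    have h2 := IntermediateField.adjoin_simple_toSubalgebra_of_isAlgebraic
      (α := t ^ p ^ n) (htint.pow _).isAlgebraic
    rw [← h2]
    exact h1
  rw [Algebra.adjoin_singleton_eq_range_aeval] at htmem
  obtain ⟨P, hP⟩ := htmem
  refine ⟨P, dvd_trans ⟨C g.leadingCoeff⁻¹, hmin⟩ (minpoly.dvd k t ?_)⟩
  rw [map_sub, expand_aeval, aeval_X, sub_eq_zero]
  exact hP

theorem BCAux.sepDvdExpand {k : Type u} [Field k] (p : ℕ) [Fact p.Prime] [CharP k p]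
    (n : ℕ) (f : k[X]) (hf : f.Separable) :
    ∃ P : k[X], f ∣ ((expand k (p ^ n)) P - X) := by
  haveI : ExpChar k p := ExpChar.prime Fact.out
  induction f using UniqueFactorizationMonoid.induction_on_prime with
  | h₁ =>
    exact absurd hf (by simpa [Polynomial.Separable] using not_isCoprime_zero_zero)
  | h₂ u hu => exact ⟨0, hu.dvd⟩
  | h₃ b q hb hq IH =>
    have hqsep : q.Separable := hf.of_mul_left
    have hbsep : b.Separable := hf.of_mul_right
    have hsq : Squarefree (q * b) := hf.squarefree
    have hnd : ¬ q ∣ b := by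
      intro hdvd
      obtain ⟨c, rfl⟩ := hdvd
      exact hq.not_unit (hsq q ⟨c, by ring⟩)
    have hcop : IsCoprime q b := (hq.irreducible.coprime_iff_not_dvd).mpr hnd
    obtain ⟨P₁, hP₁⟩ := BCAux.sepDvdExpandIrred p n q hq.irreducible hqsep
    obtain ⟨P₂, hP₂⟩ := IH hbsep
    set φ : k →+* k := (frobenius k p) ^ n with hφ
    have hexp : ∀ h : k[X], (expand k (p ^ n)) (h.map φ) = h ^ p ^ n := fun h => by
      rw [← Polynomial.map_expand, hφ, ← iterateFrobenius_eq_pow]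
      exact Polynomial.map_iterateFrobenius_expand p h n
    have hcop' : IsCoprime (q.map φ) (b.map φ) := hcop.map (mapRingHom φ)
    obtain ⟨u, v, huv⟩ := hcop'
    set Q : k[X] →ₐ[k] k[X] := expand k (p ^ n) with hQ
    have h2 : Q u * Q (q.map φ) + Q v * Q (b.map φ) = 1 := by
      rw [← map_mul, ← map_mul, ← map_add, huv, map_one]
    have h3 : Q (P₂ * u * q.map φ + P₁ * v * b.map φ) - X
        = (Q P₂ - X) * (Q u * Q (q.map φ)) + (Q P₁ - X) * (Q v * Q (b.map φ)) := by
      rw [map_add, map_mul, map_mul, map_mul, map_mul]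
      linear_combination (X : k[X]) * h2
    have hpn : p ^ n ≠ 0 := pow_ne_zero n (Nat.Prime.ne_zero Fact.out)
    refine ⟨P₂ * u * q.map φ + P₁ * v * b.map φ, hcop.mul_dvd ?_ ?_⟩
    · rw [h3]
      refine dvd_add ?_ (hP₁.mul_right _)
      rw [hexp q]
      exact ((dvd_pow_self q hpn).mul_left (Q u)).mul_left _
    · rw [h3]
      refine dvd_add (hP₂.mul_right _) ?_
      rw [hexp b]
      exact ((dvd_pow_self b hpn).mul_left (Q v)).mul_left _
open scoped TensorProduct

section Tensor

variable (p : ℕ) [Fact p.Prime] (k k' : Type u) [Field k] [Field k'] [Algebra k k']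
  [CharP k p] [IsPurelyInseparable k k'] (B : Type u) [CommRing B] [Algebra k B]

theorem BCAux.includeRight_injective :
    Function.Injective (Algebra.TensorProduct.includeRight (R := k) (A := k') (B := B)) := by
  have h : ⇑(Algebra.TensorProduct.includeRight (R := k) (A := k') (B := B)) =
      (LinearMap.rTensor B (Algebra.ofId k k').toLinearMap).comp
        (TensorProduct.lid k B).symm.toLinearMap := by
    ext x; simp
  rw [h]
  exact (Module.Flat.rTensor_preserves_injective_linearMap _
    (algebraMap k k').injective).comp (TensorProduct.lid k B).symm.injective

theorem BCAux.powMem (x : k' ⊗[k] B) :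
    ∃ n : ℕ, x ^ p ^ n ∈ (Algebra.TensorProduct.includeRight (R := k) (A := k') (B := B)).range := by
  by_cases hS : Subsingleton (k' ⊗[k] B)
  · exact ⟨0, ⟨0, Subsingleton.elim _ _⟩⟩
  haveI : Nontrivial (k' ⊗[k] B) := not_subsingleton_iff_nontrivial.mp hS
  haveI : ExpChar k p := ExpChar.prime Fact.out
  haveI : ExpChar k' p := expChar_of_injective_algebraMap (algebraMap k k').injective p
  haveI : ExpChar (k' ⊗[k] B) p :=
    expChar_of_injective_ringHom (algebraMap k' (k' ⊗[k] B)).injective p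
  induction x using TensorProduct.induction_on with
  | zero =>
    refine ⟨0, 0, ?_⟩
    simp
  | tmul c b =>
    obtain ⟨n, d, hd⟩ := IsPurelyInseparable.pow_mem k p c
    refine ⟨n, d • b ^ p ^ n, ?_⟩
    show (1 : k') ⊗ₜ[k] (d • b ^ p ^ n) = (c ⊗ₜ[k] b) ^ p ^ n
    rw [Algebra.TensorProduct.tmul_pow, TensorProduct.tmul_smul, TensorProduct.smul_tmul',
      ← Algebra.algebraMap_eq_smul_one, hd]
  | add x y hx hy =>
    obtain ⟨m, hm⟩ := hx
    obtain ⟨n, hn⟩ := hy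
    refine ⟨m + n, ?_⟩
    rw [add_pow_expChar_pow]
    apply add_mem
    · have : x ^ p ^ (m + n) = (x ^ p ^ m) ^ p ^ n := by
        rw [← pow_mul, ← pow_add]
      rw [this]
      exact pow_mem hm _
    · have : y ^ p ^ (m + n) = (y ^ p ^ n) ^ p ^ m := by
        rw [← pow_mul, ← pow_add, Nat.add_comm]
      rw [this]
      exact pow_mem hn _

include p in
theorem BCAux.memRange (x : k' ⊗[k] B) (f : Polynomial k) (hf : f.Separable)
    (hx : Polynomial.aeval x f = 0) :
    x ∈ (Algebra.TensorProduct.includeRight (R := k) (A := k') (B := B)).range := by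
  obtain ⟨n, b, hb⟩ := BCAux.powMem p k k' B x
  obtain ⟨P, e, he⟩ := BCAux.sepDvdExpand p n f hf
  have h0 : Polynomial.aeval x ((Polynomial.expand k (p ^ n)) P - Polynomial.X) = 0 := by
    rw [he, map_mul, hx, zero_mul]
  rw [map_sub, Polynomial.expand_aeval, Polynomial.aeval_X, sub_eq_zero] at h0
  have hb' : (Algebra.TensorProduct.includeRight : B →ₐ[k] k' ⊗[k] B) b = x ^ p ^ n := hb
  rw [← h0, ← hb', Polynomial.aeval_algHom_apply
    (Algebra.TensorProduct.includeRight (R := k) (A := k') (B := B)) b P]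
  exact ⟨_, rfl⟩

end Tensor
section FieldCaseAux

variable (p : ℕ) [Fact p.Prime] (k k' : Type u) [Field k] [Field k'] [Algebra k k']
  [CharP k p] [IsPurelyInseparable k k']

include p in
theorem BCAux.fieldDescent (L : Type u) [Field L] [Algebra k' L] [Module.Finite k' L]
    [Algebra.IsSeparable k' L] :
    ∃ (B : Type u) (_ : Field B) (_ : Algebra k B) (_ : Module.Finite k B)
      (_ : Algebra.Etale k B), Nonempty (k' ⊗[k] B ≃ₐ[k'] L) := by
  letI : Algebra k L := ((algebraMap k' L).comp (algebraMap k k')).toAlgebra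
  haveI : IsScalarTower k k' L := IsScalarTower.of_algebraMap_eq' rfl
  haveI : ExpChar k p := ExpChar.prime Fact.out
  haveI : ExpChar k' p := expChar_of_injective_algebraMap (algebraMap k k').injective p
  haveI : ExpChar L p := expChar_of_injective_algebraMap (algebraMap k' L).injective p
  haveI : FiniteDimensional k' L := ‹Module.Finite k' L›
  obtain ⟨α, hα⟩ := Field.exists_primitive_element k' L
  set m : k'[X] := minpoly k' α with hm
  have hαint : IsIntegral k' α := Algebra.IsIntegral.isIntegral α
  have hmsep : m.Separable := Algebra.IsSeparable.isSeparable k' α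
  choose nc hnc using fun c : k' => IsPurelyInseparable.pow_mem k p c
  set n := m.support.sup (fun i => nc (m.coeff i)) with hn
  have hpn0 : p ^ n ≠ 0 := pow_ne_zero n (Nat.Prime.ne_zero Fact.out)
  have hcoe : ∀ i, (m.coeff i) ^ p ^ n ∈ (algebraMap k k').range := by
    intro i
    by_cases hi : i ∈ m.support
    · have hle : nc (m.coeff i) ≤ n := Finset.le_sup (f := fun j => nc (m.coeff j)) hi
      obtain ⟨d, hd⟩ := hnc (m.coeff i)
      refine ⟨d ^ p ^ (n - nc (m.coeff i)), ?_⟩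
      rw [map_pow, hd, ← pow_mul, ← pow_add, Nat.add_sub_cancel' hle]
    · rw [Polynomial.notMem_support_iff.mp hi]
      exact ⟨0, by rw [map_zero, zero_pow hpn0]⟩
  set φ : k' →+* k' := (frobenius k' p) ^ n with hφ
  have hφapp : ∀ c : k', φ c = c ^ p ^ n := by
    intro c
    show (⇑(frobenius k' p))^[n] c = _
    rw [iterate_frobenius]
  set m₂ : k'[X] := m.map φ with hm₂def
  have hm₂sep : m₂.Separable := hmsep.map
  have hmm : m₂ ∈ Polynomial.lifts (algebraMap k k') := by
    rw [Polynomial.lifts_iff_coeff_lifts]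
    intro i
    rw [Polynomial.coeff_map, hφapp]
    exact hcoe i
  obtain ⟨m', hm'⟩ := (Polynomial.mem_lifts _).mp hmm
  have hm'sep : m'.Separable := by
    rw [← Polynomial.separable_map (algebraMap k k'), hm']
    exact hm₂sep
  set β : L := α ^ p ^ n with hβ
  have hβfrob : β = ((frobenius L p) ^ n) α := by
    rw [hβ]
    show _ = (⇑(frobenius L p))^[n] α
    rw [iterate_frobenius]
  have hcomp : (algebraMap k' L).comp φ = ((frobenius L p) ^ n).comp (algebraMap k' L) := by
    ext c
    show algebraMap k' L (φ c) = (⇑(frobenius L p))^[n] (algebraMap k' L c)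
    rw [hφapp, iterate_frobenius, map_pow]
  have hev2 : Polynomial.aeval β m₂ = 0 := by
    rw [Polynomial.aeval_def, hm₂def, Polynomial.eval₂_map, hcomp, hβfrob]
    rw [← Polynomial.hom_eval₂ m (algebraMap k' L) ((frobenius L p) ^ n) α]
    rw [← Polynomial.aeval_def, hm, minpoly.aeval, map_zero]
  have hev : Polynomial.aeval β m' = 0 := by
    have : Polynomial.aeval β (m'.map (algebraMap k k')) = Polynomial.aeval β m' :=
      Polynomial.aeval_map_algebraMap k' β m'
    rw [← this, hm', hev2]
  have hβsep : IsSeparable k β := hm'sep.of_dvd (minpoly.dvd k β hev)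
  have hβint : IsIntegral k β := hβsep.isIntegral
  have hβint' : IsIntegral k' β := hβint.tower_top
  have htop' : k'⟮β⟯ = ⊤ := by
    have h := IntermediateField.adjoin_eq_adjoin_pow_expChar_pow_of_isSeparable' k' L {α} p n
    rw [Set.image_singleton] at h
    rw [hβ, ← h]
    exact hα
  haveI hfd : FiniteDimensional k ↥k⟮β⟯ := IntermediateField.adjoin.finiteDimensional hβint
  haveI hsepB : Algebra.IsSeparable k ↥k⟮β⟯ :=
    (IntermediateField.isSeparable_adjoin_simple_iff_isSeparable k L).2 hβsep
  haveI : Algebra.FormallyEtale k ↥k⟮β⟯ := Algebra.FormallyEtale.of_isSeparable k _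
  haveI : Algebra.FinitePresentation k ↥k⟮β⟯ :=
    (Algebra.FinitePresentation.of_finiteType).mp inferInstance
  haveI : Algebra.Etale k ↥k⟮β⟯ := {}
  set ψ : k' ⊗[k] ↥k⟮β⟯ →ₐ[k'] L :=
    Algebra.TensorProduct.lift (Algebra.ofId k' L) (IntermediateField.val k⟮β⟯)
      (fun x y => Commute.all _ _) with hψ
  have hψβ : ψ ((1 : k') ⊗ₜ[k] ⟨β, IntermediateField.mem_adjoin_simple_self k β⟩) = β := by
    rw [hψ, Algebra.TensorProduct.lift_tmul, map_one, one_mul]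
    rfl
  have hsurj : Function.Surjective ψ := by
    rw [← AlgHom.range_eq_top]
    have hr : Algebra.adjoin k' {β} = ⊤ := by
      rw [← IntermediateField.adjoin_simple_toSubalgebra_of_isAlgebraic hβint'.isAlgebraic, htop',
        IntermediateField.top_toSubalgebra]
    refine top_le_iff.mp ?_
    rw [← hr]
    refine Algebra.adjoin_le ?_
    rintro x rfl
    exact ⟨_, hψβ⟩
  have hdim : Module.finrank k' (k' ⊗[k] ↥k⟮β⟯) = Module.finrank k' L := by
    rw [Module.finrank_baseChange, IntermediateField.adjoin.finrank hβint]
    have h1 : (minpoly k β).map (algebraMap k k') = minpoly k' β :=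
      minpoly.map_eq_of_isSeparable_of_isPurelyInseparable k' β hβsep
    have h2 : (minpoly k β).natDegree = (minpoly k' β).natDegree := by
      rw [← h1, Polynomial.natDegree_map_eq_of_injective (algebraMap k k').injective]
    rw [h2, ← IntermediateField.adjoin.finrank hβint', htop', IntermediateField.finrank_top']
  have hinj : Function.Injective ψ := by
    have := (LinearMap.injective_iff_surjective_of_finrank_eq_finrank
      (f := ψ.toLinearMap) hdim).mpr hsurj
    exact this
  exact ⟨↥k⟮β⟯, inferInstance, inferInstance, hfd, inferInstance,
    ⟨AlgEquiv.ofBijective ψ ⟨hinj, hsurj⟩⟩⟩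

end FieldCaseAux
/-- The category of finite étale algebras over a field `k`: objects are commutative
`k`-algebras that are finite as `k`-modules and étale over `k`; morphisms are `k`-algebra
homomorphisms. -/
structure FiniteEtaleAlg (k : Type u) [Field k] : Type (u + 1) where
  carrier : Type u
  [isCommRing : CommRing carrier]
  [isAlgebra : Algebra k carrier]
  [isFinite : Module.Finite k carrier]
  [isEtale : Algebra.Etale k carrier]

attribute [instance] FiniteEtaleAlg.isCommRing FiniteEtaleAlg.isAlgebra
  FiniteEtaleAlg.isFinite FiniteEtaleAlg.isEtale

instance (k : Type u) [Field k] : Category (FiniteEtaleAlg k) where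
  Hom A B := A.carrier →ₐ[k] B.carrier
  id A := AlgHom.id k A.carrier
  comp f g := g.comp f
  id_comp f := AlgHom.comp_id f
  comp_id f := AlgHom.id_comp f
  assoc f g h := (AlgHom.comp_assoc h g f).symm

/-- The base-change functor `A ↦ A ⊗_k k'` (realized as `k' ⊗[k] A`) from finite étale
`k`-algebras to finite étale `k'`-algebras. -/
noncomputable def baseChangeFunctor (k : Type u) [Field k] (k' : Type u) [Field k']
    [Algebra k k'] : FiniteEtaleAlg k ⥤ FiniteEtaleAlg k' where
  obj A := { carrier := k' ⊗[k] A.carrier }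
  map {A B} f := Algebra.TensorProduct.map (AlgHom.id k' k') f
  map_id A := Algebra.TensorProduct.map_id
  map_comp {A B C} f g := Algebra.TensorProduct.map_id_comp g f

/-- Build an isomorphism in `FiniteEtaleAlg k` from an algebra equivalence. -/
def BCAux.isoOfAlgEquiv {k : Type u} [Field k] {X Y : FiniteEtaleAlg k}
    (e : X.carrier ≃ₐ[k] Y.carrier) : X ≅ Y where
  hom := e.toAlgHom
  inv := e.symm.toAlgHom
  hom_inv_id := AlgHom.ext fun x => e.symm_apply_apply x
  inv_hom_id := AlgHom.ext fun x => e.apply_symm_apply x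

theorem BCAux.fieldDescent' (p : ℕ) [Fact p.Prime] (k k' : Type u) [Field k] [Field k']
    [Algebra k k'] [CharP k p] [IsPurelyInseparable k k'] (L : Type u) [Field L] [Algebra k' L]
    [Module.Finite k' L] [Algebra.IsSeparable k' L] :
    ∃ B : FiniteEtaleAlg k, Nonempty (k' ⊗[k] B.carrier ≃ₐ[k'] L) := by
  obtain ⟨B, hF, hA, hM, hE, ⟨e⟩⟩ := BCAux.fieldDescent p k k' L
  letI := hF; letI := hA; haveI := hM; haveI := hE
  exact ⟨{ carrier := B }, ⟨e⟩⟩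

/-- Let `k` be a field of characteristic `p > 0` and `k'` a purely
inseparable field extension of `k`.  Then the base-change functor `A ↦ A ⊗_k k'` from the
category of finite étale `k`-algebras to the category of finite étale `k'`-algebras is an
equivalence of categories. -/
theorem baseChangeFunctor_isEquivalence_of_purelyInseparable
    (p : ℕ) [Fact p.Prime] (k k' : Type u) [Field k] [Field k'] [Algebra k k']
    [CharP k p] [IsPurelyInseparable k k'] :
    (baseChangeFunctor k k').IsEquivalence := by
  constructor
  · -- Faithful
    refine ⟨fun {A B} {f g} h => ?_⟩
    have h' : Algebra.TensorProduct.map (AlgHom.id k' k') f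
        = Algebra.TensorProduct.map (AlgHom.id k' k') g := h
    apply AlgHom.ext
    intro a
    apply BCAux.includeRight_injective k k' B.carrier
    have := congrArg (fun (F : k' ⊗[k] A.carrier →ₐ[k'] k' ⊗[k] B.carrier) =>
      F ((1 : k') ⊗ₜ[k] a)) h'
    simpa [Algebra.TensorProduct.map_tmul] using this
  · -- Full
    refine ⟨fun {A B} gg => ?_⟩
    let g : k' ⊗[k] A.carrier →ₐ[k'] k' ⊗[k] B.carrier := gg
    set S := (Algebra.TensorProduct.includeRight (R := k) (A := k') (B := B.carrier)).range
      with hS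
    set h : A.carrier →ₐ[k] k' ⊗[k] B.carrier :=
      ((g : k' ⊗[k] A.carrier →ₐ[k'] k' ⊗[k] B.carrier).restrictScalars k).comp
        Algebra.TensorProduct.includeRight with hh
    have hmem : ∀ a : A.carrier, h a ∈ S := by
      intro a
      refine BCAux.memRange p k k' B.carrier (h a) (minpoly k a)
        (BCAux.minpolySep k A.carrier a) ?_
      rw [Polynomial.aeval_algHom_apply h a (minpoly k a), minpoly.aeval, map_zero]
    let e := AlgEquiv.ofInjective _ (BCAux.includeRight_injective k k' B.carrier)
    have key : ∀ y : S, (Algebra.TensorProduct.includeRight : _ →ₐ[k] _) (e.symm y)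
        = (y : k' ⊗[k] B.carrier) := by
      intro y
      have h2 := congrArg Subtype.val (e.apply_symm_apply y)
      exact h2
    refine ⟨e.symm.toAlgHom.comp (h.codRestrict S hmem), ?_⟩
    show Algebra.TensorProduct.map (AlgHom.id k' k')
      (e.symm.toAlgHom.comp (h.codRestrict S hmem)) = g
    apply Algebra.TensorProduct.ext
    · apply AlgHom.ext
      intro c
      show Algebra.TensorProduct.map (AlgHom.id k' k') _ (c ⊗ₜ[k] 1) = g (c ⊗ₜ[k] 1)
      rw [Algebra.TensorProduct.map_tmul, map_one]
      simp only [AlgHom.coe_id, id_eq]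
      have h1 : (c ⊗ₜ[k] (1 : A.carrier)) = algebraMap k' (k' ⊗[k] A.carrier) c := rfl
      have h2 : (c ⊗ₜ[k] (1 : B.carrier)) = algebraMap k' (k' ⊗[k] B.carrier) c := rfl
      rw [h1, h2]
      exact (g.commutes c).symm
    · apply AlgHom.ext
      intro a
      show Algebra.TensorProduct.map (AlgHom.id k' k') _ ((1:k') ⊗ₜ[k] a) = g ((1:k') ⊗ₜ[k] a)
      rw [Algebra.TensorProduct.map_tmul, map_one]
      have : ((1:k') ⊗ₜ[k] (e.symm.toAlgHom.comp (h.codRestrict S hmem)) a)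
          = (Algebra.TensorProduct.includeRight : _ →ₐ[k] _)
              ((e.symm.toAlgHom.comp (h.codRestrict S hmem)) a) := rfl
      rw [this]
      show (Algebra.TensorProduct.includeRight : _ →ₐ[k] _)
        (e.symm (h.codRestrict S hmem a)) = _
      rw [key]
      rfl
  · -- EssSurj
    refine ⟨fun Y => ?_⟩
    set C := Y.carrier with hC
    haveI : Algebra.FormallyUnramified k' C := inferInstance
    haveI := BCAux.artinian k' C
    haveI := (IsArtinianRing.setOfPred_isMaximal_finite C).to_subtype
    haveI : Fintype {I : Ideal C | I.IsMaximal} := Fintype.ofFinite _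
    haveI inst1 : ∀ I : {I : Ideal C | I.IsMaximal}, I.1.IsMaximal := fun I => I.2
    letI instF : ∀ I : {I : Ideal C | I.IsMaximal}, Field (C ⧸ I.1) :=
      fun I => Ideal.Quotient.field I.1
    haveI instFin : ∀ I : {I : Ideal C | I.IsMaximal}, Module.Finite k' (C ⧸ I.1) :=
      fun I => BCAux.quotFinite k' C I.1
    haveI instSep : ∀ I : {I : Ideal C | I.IsMaximal}, Algebra.IsSeparable k' (C ⧸ I.1) :=
      fun I => BCAux.quotIsSep k' C I.1 I.2
    choose Bi hBi using fun I : {I : Ideal C | I.IsMaximal} =>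
      BCAux.fieldDescent' p k k' (C ⧸ I.1)
    haveI : Algebra.FormallyEtale k (∀ I, (Bi I).carrier) := by
      rw [Algebra.FormallyEtale.iff_formallyUnramified_and_formallySmooth]
      exact ⟨(Algebra.FormallyUnramified.pi_iff _).mpr fun I => inferInstance,
        (Algebra.FormallySmooth.pi_iff _).mpr fun I => inferInstance⟩
    haveI : Algebra.FinitePresentation k (∀ I, (Bi I).carrier) :=
      (Algebra.FinitePresentation.of_finiteType).mp inferInstance
    haveI : Algebra.Etale k (∀ I, (Bi I).carrier) := {}
    classical
    let E1 := Algebra.TensorProduct.piRight k k' k' (fun I => (Bi I).carrier)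
    let E2 := AlgEquiv.piCongrRight (fun I => (hBi I).some)
    let E3 := (BCAux.decompEquiv k' C).symm
    exact ⟨{ carrier := ∀ I, (Bi I).carrier }, ⟨BCAux.isoOfAlgEquiv ((E1.trans E2).trans E3)⟩⟩
end

section
/- Let k be a field of characteristic p > 0 with algebraic closure k^alg, let l ⊆ k^alg be a finite Galois extension of k, let n ≥ 0 be an integer, put k_n = {x ∈ k^alg : x^{p^n} ∈ k} and let l_n be the compositum of k_n and l in k^alg. Then: (a) the map δ : l_n → l, x ↦ x^{p^n}, is a well-defined field isomorphism onto l carrying k_n onto k (in particular the compositum of k and l^{p^n} equals l); (b) l_n is finite Galois over k_n and δ induces a group isomorphism ψ : Gal(l/k) → Gal(l_n/k_n), ψ(σ) = δ^{-1} ∘ σ ∘ δ; and (c) the composite of ψ with the restriction isomorphism ρ : Gal(l_n/k_n) → Gal(l/k), τ ↦ τ|_l, is the identity map of Gal(l/k). -/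
noncomputable section

variable (p n : ℕ) [Fact p.Prime] (k kalg : Type*) [Field k] [Field kalg]
  [Algebra k kalg] [CharP k p] [CharP kalg p]

/-- The intermediate field `k^{p^{-n}} = {x ∈ kalg : x^{p^n} ∈ k}` of `kalg / k`. -/
def pRoots : IntermediateField k kalg :=
  Subfield.toIntermediateField
    (((algebraMap k kalg).fieldRange).comap (iterateFrobenius kalg p n))
    (fun x => by
      rw [Subfield.mem_comap]
      exact RingHom.mem_fieldRange.mpr ⟨x ^ p ^ n, by rw [map_pow, iterateFrobenius_def]⟩)

variable (l : IntermediateField k kalg)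

/-- The compositum `l_n = k^{p^{-n}} · l`, viewed as an extension of `k_n = k^{p^{-n}}`. -/
def composLn : IntermediateField (pRoots p n k kalg) kalg :=
  IntermediateField.extendScalars
    (le_sup_left : pRoots p n k kalg ≤ pRoots p n k kalg ⊔ l)

set_option linter.unusedSectionVars false

lemma mem_pRoots {x : kalg} :
    x ∈ pRoots p n k kalg ↔ x ^ p ^ n ∈ (algebraMap k kalg).fieldRange := by
  rw [pRoots]
  change x ∈ Subfield.comap _ _ ↔ _
  rw [Subfield.mem_comap, iterateFrobenius_def]

lemma frob_sup_eq [IsAlgClosure k kalg] [FiniteDimensional k ↥l] [IsGalois k ↥l] :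
    (algebraMap k kalg).fieldRange ⊔
      Subfield.map (iterateFrobenius kalg p n) l.toSubfield = l.toSubfield := by
  set M : Subfield kalg := (algebraMap k kalg).fieldRange ⊔
      Subfield.map (iterateFrobenius kalg p n) l.toSubfield with hM
  have hle : M ≤ l.toSubfield := by
    refine sup_le ?_ ?_
    · rintro x ⟨a, rfl⟩
      exact l.algebraMap_mem a
    · rintro x ⟨y, hy, rfl⟩
      rw [iterateFrobenius_def]
      exact pow_mem hy _
  refine le_antisymm hle ?_
  have halg : ∀ a : k, l.toSubfield.subtype (algebraMap k ↥l a) ∈ M := fun a => by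
    refine le_sup_left (α := Subfield kalg) ?_
    exact ⟨a, IsScalarTower.algebraMap_apply k ↥l kalg a⟩
  set N : IntermediateField k ↥l := Subfield.toIntermediateField
    (M.comap l.toSubfield.subtype) (fun a => by rw [Subfield.mem_comap]; exact halg a) with hN
  have hmemN : ∀ x : ↥l, x ∈ N ↔ (x : kalg) ∈ M := fun x => Iff.rfl
  haveI : CharP ↥N p := charP_of_injective_algebraMap (algebraMap k ↥N).injective p
  haveI : ExpChar ↥N p := ExpChar.prime Fact.out
  haveI : IsPurelyInseparable ↥N ↥l := by
    rw [isPurelyInseparable_iff_pow_mem ↥N p]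
    intro x
    refine ⟨n, ?_⟩
    have hx : (x : kalg) ^ p ^ n ∈ M := by
      refine le_sup_right (α := Subfield kalg) ?_
      exact ⟨(x : kalg), x.2, by rw [iterateFrobenius_def]⟩
    have hx' : ((x ^ p ^ n : ↥l) : kalg) ∈ M := by push_cast; exact hx
    exact ⟨⟨x ^ p ^ n, (hmemN _).2 hx'⟩, rfl⟩
  haveI : Algebra.IsSeparable ↥N ↥l :=
    Algebra.isSeparable_tower_top_of_isSeparable k ↥N ↥l
  intro x hx
  obtain ⟨y, hy⟩ := IsPurelyInseparable.surjective_algebraMap_of_isSeparable ↥N ↥l ⟨x, hx⟩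
  have h2 : ((algebraMap ↥N ↥l y : ↥l) : kalg) ∈ M := (hmemN _).1 (by
    have : (algebraMap ↥N ↥l y : ↥l) = (y : ↥l) := rfl
    rw [this]; exact y.2)
  rwa [hy] at h2

lemma mem_composLn_iff [IsAlgClosure k kalg] [FiniteDimensional k ↥l] [IsGalois k ↥l] {x : kalg} :
    x ∈ composLn p n k kalg l ↔ x ^ p ^ n ∈ l := by
  haveI : IsAlgClosed kalg := IsAlgClosure.isAlgClosed k
  haveI : ExpChar kalg p := ExpChar.prime Fact.out
  haveI : PerfectRing kalg p := PerfectField.toPerfectRing p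
  have hpow : ∀ y : kalg, (iterateFrobeniusEquiv kalg p n).symm y ^ p ^ n = y := fun y => by
    conv_rhs => rw [← RingEquiv.apply_symm_apply (iterateFrobeniusEquiv kalg p n) y]
    rw [iterateFrobeniusEquiv_def]
  show x ∈ pRoots p n k kalg ⊔ l ↔ _
  constructor
  · intro hx
    have h1 : pRoots p n k kalg ⊔ l ≤ Subfield.toIntermediateField
        (l.toSubfield.comap (iterateFrobenius kalg p n))
        (fun a => by
          rw [Subfield.mem_comap, iterateFrobenius_def, ← map_pow]
          exact l.algebraMap_mem _) := by
      refine sup_le ?_ ?_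
      · intro y hy
        rw [mem_pRoots] at hy
        change y ∈ Subfield.comap _ _
        rw [Subfield.mem_comap, iterateFrobenius_def]
        obtain ⟨a, ha⟩ := hy
        exact ha ▸ l.algebraMap_mem a
      · intro y hy
        change y ∈ Subfield.comap _ _
        rw [Subfield.mem_comap, iterateFrobenius_def]
        exact pow_mem hy _
    have := h1 hx
    change x ∈ Subfield.comap _ _ at this
    rwa [Subfield.mem_comap, iterateFrobenius_def] at this
  · intro hx
    have h2 : x ^ p ^ n ∈ (algebraMap k kalg).fieldRange ⊔
        Subfield.map (iterateFrobenius kalg p n) l.toSubfield :=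
      (frob_sup_eq p n k kalg l).symm ▸ hx
    have h3 : (algebraMap k kalg).fieldRange ⊔
        Subfield.map (iterateFrobenius kalg p n) l.toSubfield ≤
        Subfield.map (iterateFrobenius kalg p n) (pRoots p n k kalg ⊔ l).toSubfield := by
      refine sup_le ?_ ?_
      · rintro y ⟨a, rfl⟩
        refine ⟨(iterateFrobeniusEquiv kalg p n).symm (algebraMap k kalg a), ?_, ?_⟩
        · have : (iterateFrobeniusEquiv kalg p n).symm (algebraMap k kalg a) ∈
              pRoots p n k kalg := by
            rw [mem_pRoots, hpow]
            exact ⟨a, rfl⟩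
          exact (IntermediateField.mem_toSubfield _ _).2
            (le_sup_left (α := IntermediateField k kalg) (a := pRoots p n k kalg) (b := l) this)
        · rw [iterateFrobenius_def, hpow]
      · refine (Subfield.gc_map_comap _).monotone_l ?_
        intro y hy
        exact (IntermediateField.mem_toSubfield _ _).2
          (le_sup_right (α := IntermediateField k kalg) (a := pRoots p n k kalg) (b := l)
            ((IntermediateField.mem_toSubfield _ _).1 hy))
    obtain ⟨y, hy, hyx⟩ := h3 h2
    rw [iterateFrobenius_def] at hyx
    have hinj : Function.Injective (fun z : kalg => z ^ p ^ n) := by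
      have := (iterateFrobeniusEquiv kalg p n).injective
      exact fun a b h => this (by rw [iterateFrobeniusEquiv_def, iterateFrobeniusEquiv_def]; exact h)
    have : y = x := hinj hyx
    rwa [← this]

lemma composLn_isGalois [IsAlgClosure k kalg] [FiniteDimensional k ↥l] [IsGalois k ↥l] :
    FiniteDimensional ↥(pRoots p n k kalg) ↥(composLn p n k kalg l) ∧
    IsGalois ↥(pRoots p n k kalg) ↥(composLn p n k kalg l) := by
  classical
  haveI : IsAlgClosed kalg := IsAlgClosure.isAlgClosed k
  obtain ⟨P, hPsep, hPsplit⟩ := IsGalois.is_separable_splitting_field k ↥l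
  have hl : l = IntermediateField.adjoin k (P.rootSet kalg) :=
    ((IntermediateField.isSplittingField_iff).1 hPsplit).2
  set K := pRoots p n k kalg with hK
  set Q := P.map (algebraMap k ↥K) with hQ
  have hQsep : Q.Separable := hPsep.map
  have hQroot : Q.rootSet kalg = P.rootSet kalg := by
    have hmap : Q.map (algebraMap ↥K kalg) = P.map (algebraMap k kalg) := by
      rw [hQ, Polynomial.map_map, ← IsScalarTower.algebraMap_eq]
    rw [Polynomial.rootSet_def, Polynomial.rootSet_def, Polynomial.aroots_def,
      Polynomial.aroots_def, hmap]
  have hcomp : composLn p n k kalg l =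
      IntermediateField.adjoin ↥K (Q.rootSet kalg) := by
    apply IntermediateField.restrictScalars_injective k
    rw [composLn, IntermediateField.extendScalars_restrictScalars,
      IntermediateField.restrictScalars_adjoin_eq_sup, hQroot, ← hl]
  haveI hsf : Q.IsSplittingField ↥K ↥(IntermediateField.adjoin ↥K (Q.rootSet kalg)) :=
    IntermediateField.adjoin_rootSet_isSplittingField (IsAlgClosed.splits _)
  haveI : FiniteDimensional ↥K ↥(IntermediateField.adjoin ↥K (Q.rootSet kalg)) :=
    Polynomial.IsSplittingField.finiteDimensional _ Q
  haveI : IsGalois ↥K ↥(IntermediateField.adjoin ↥K (Q.rootSet kalg)) :=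
    IsGalois.of_separable_splitting_field hQsep
  constructor <;> rw [hcomp] <;> infer_instance

/-- Let `k` be a field of characteristic `p > 0` with algebraic closure
`kalg`, let `l ⊆ kalg` be a finite Galois extension of `k`, let `n ≥ 0`, put
`k_n = {x ∈ kalg : x^{p^n} ∈ k}` and let `l_n` be the compositum of `k_n` and `l` in
`kalg`.  Then: (a) the map `δ : l_n → l`, `x ↦ x^{p^n}`, is a well-defined field
isomorphism onto `l` carrying `k_n` onto `k` (in particular the compositum of `k` and
`l^{p^n}` equals `l`); (b) `l_n` is finite Galois over `k_n` and `δ` induces a group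
isomorphism `ψ : Gal(l/k) → Gal(l_n/k_n)`, `ψ(σ) = δ⁻¹ ∘ σ ∘ δ`; and (c) the composite
of `ψ` with the restriction isomorphism `ρ : Gal(l_n/k_n) → Gal(l/k)`, `τ ↦ τ|_l`, is the
identity of `Gal(l/k)`. -/
theorem pow_p_n_conjugation_of_galoisGroup_is_inverse_of_restriction
    [IsAlgClosure k kalg] [FiniteDimensional k ↥l] [IsGalois k ↥l] :
    ∃ δ : ↥(composLn p n k kalg l) ≃+* ↥l,
      (∀ x : ↥(composLn p n k kalg l), ((δ x : ↥l) : kalg) = (x : kalg) ^ p ^ n) ∧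
      (∀ x : ↥(composLn p n k kalg l),
        (x : kalg) ∈ pRoots p n k kalg ↔
          ((δ x : ↥l) : kalg) ∈ (algebraMap k kalg).fieldRange) ∧
      ((algebraMap k kalg).fieldRange ⊔
          Subfield.map (iterateFrobenius kalg p n) l.toSubfield = l.toSubfield) ∧
      FiniteDimensional ↥(pRoots p n k kalg) ↥(composLn p n k kalg l) ∧
      IsGalois ↥(pRoots p n k kalg) ↥(composLn p n k kalg l) ∧
      ∃ ψ : (↥l ≃ₐ[k] ↥l) ≃*
          (↥(composLn p n k kalg l) ≃ₐ[↥(pRoots p n k kalg)] ↥(composLn p n k kalg l)),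
        (∀ (σ : ↥l ≃ₐ[k] ↥l) (x : ↥(composLn p n k kalg l)),
          δ ((ψ σ) x) = σ (δ x)) ∧
        ∃ ρ : (↥(composLn p n k kalg l) ≃ₐ[↥(pRoots p n k kalg)]
                ↥(composLn p n k kalg l)) ≃* (↥l ≃ₐ[k] ↥l),
          (∀ (τ : ↥(composLn p n k kalg l) ≃ₐ[↥(pRoots p n k kalg)]
                ↥(composLn p n k kalg l))
            (x : ↥l) (hx : (x : kalg) ∈ composLn p n k kalg l),
            (((ρ τ) x : ↥l) : kalg) =
              ((τ ⟨(x : kalg), hx⟩ : ↥(composLn p n k kalg l)) : kalg)) ∧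
          (∀ σ : ↥l ≃ₐ[k] ↥l, ρ (ψ σ) = σ) := by
  haveI : IsAlgClosed kalg := IsAlgClosure.isAlgClosed k
  haveI : ExpChar kalg p := ExpChar.prime Fact.out
  haveI : PerfectRing kalg p := PerfectField.toPerfectRing p
  have hinj : ∀ x y : kalg, x ^ p ^ n = y ^ p ^ n → x = y := fun x y h =>
    (iterateFrobeniusEquiv kalg p n).injective (by rwa [iterateFrobeniusEquiv_def,
      iterateFrobeniusEquiv_def])
  have hpow : ∀ y : kalg, (iterateFrobeniusEquiv kalg p n).symm y ^ p ^ n = y := fun y => by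
    conv_rhs => rw [← RingEquiv.apply_symm_apply (iterateFrobeniusEquiv kalg p n) y]
    rw [iterateFrobeniusEquiv_def]
  have hmem : ∀ x : kalg, x ∈ composLn p n k kalg l ↔ x ^ p ^ n ∈ l := fun x =>
    mem_composLn_iff p n k kalg l
  -- the isomorphism δ
  let δ : ↥(composLn p n k kalg l) ≃+* ↥l :=
  { toFun := fun x => ⟨(x : kalg) ^ p ^ n, (hmem _).1 x.2⟩
    invFun := fun y => ⟨(iterateFrobeniusEquiv kalg p n).symm (y : kalg),
      (hmem _).2 (by rw [hpow]; exact y.2)⟩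
    left_inv := fun x => Subtype.ext (by
      show (iterateFrobeniusEquiv kalg p n).symm ((x : kalg) ^ p ^ n) = (x : kalg)
      rw [← iterateFrobeniusEquiv_def, RingEquiv.symm_apply_apply])
    right_inv := fun y => Subtype.ext (hpow (y : kalg))
    map_mul' := fun x y => Subtype.ext (by push_cast; ring)
    map_add' := fun x y => Subtype.ext (by push_cast [add_pow_expChar_pow]; ring) }
  have hδ1 : ∀ x : ↥(composLn p n k kalg l), ((δ x : ↥l) : kalg) = (x : kalg) ^ p ^ n :=
    fun x => rfl
  have hδsymm : ∀ y : ↥l, ((δ.symm y : ↥(composLn p n k kalg l)) : kalg) ^ p ^ n = (y : kalg) :=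
    fun y => by
      rw [← hδ1 (δ.symm y), RingEquiv.apply_symm_apply]
  have hamap : ∀ c : ↥(pRoots p n k kalg),
      ((algebraMap ↥(pRoots p n k kalg) ↥(composLn p n k kalg l) c :
        ↥(composLn p n k kalg l)) : kalg) = (c : kalg) := fun c => rfl
  have hamapl : ∀ a : k, ((algebraMap k ↥l a : ↥l) : kalg) = algebraMap k kalg a := fun a =>
    (IsScalarTower.algebraMap_apply k ↥l kalg a).symm
  -- forward conjugation map
  have hcomm : ∀ σ : ↥l ≃ₐ[k] ↥l, ∀ c : ↥(pRoots p n k kalg),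
      (δ.trans (σ.toRingEquiv.trans δ.symm)) (algebraMap _ ↥(composLn p n k kalg l) c) =
        algebraMap _ ↥(composLn p n k kalg l) c := by
    intro σ c
    apply Subtype.ext
    apply hinj
    rw [RingEquiv.trans_apply, RingEquiv.trans_apply]
    rw [hδsymm]
    obtain ⟨a, ha⟩ := (mem_pRoots p n k kalg).1 c.2
    have h4 : δ (algebraMap _ ↥(composLn p n k kalg l) c) = algebraMap k ↥l a := by
      apply Subtype.ext
      rw [hδ1, hamap, hamapl, ha]
    have h6 : σ.toRingEquiv (algebraMap k ↥l a) = algebraMap k ↥l a := σ.commutes a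
    rw [h4, h6, hamapl, ha, hamap]
  have hcomm' : ∀ τ : (↥(composLn p n k kalg l) ≃ₐ[↥(pRoots p n k kalg)]
        ↥(composLn p n k kalg l)), ∀ a : k,
      (δ.symm.trans (τ.toRingEquiv.trans δ)) (algebraMap k ↥l a) = algebraMap k ↥l a := by
    intro τ a
    have hz : ((δ.symm (algebraMap k ↥l a) : ↥(composLn p n k kalg l)) : kalg) ∈
        pRoots p n k kalg := by
      rw [mem_pRoots, hδsymm, hamapl]
      exact ⟨a, rfl⟩
    have h5 : δ.symm (algebraMap k ↥l a) =
        algebraMap _ ↥(composLn p n k kalg l) (⟨_, hz⟩ : ↥(pRoots p n k kalg)) :=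
      Subtype.ext rfl
    rw [RingEquiv.trans_apply, RingEquiv.trans_apply]
    show δ (τ (δ.symm (algebraMap k ↥l a))) = _
    rw [h5, AlgEquiv.commutes, ← h5, RingEquiv.apply_symm_apply]
  let ψ : (↥l ≃ₐ[k] ↥l) ≃*
      (↥(composLn p n k kalg l) ≃ₐ[↥(pRoots p n k kalg)] ↥(composLn p n k kalg l)) :=
  { toFun := fun σ => AlgEquiv.ofRingEquiv (f := δ.trans (σ.toRingEquiv.trans δ.symm)) (hcomm σ)
    invFun := fun τ => AlgEquiv.ofRingEquiv (f := δ.symm.trans (τ.toRingEquiv.trans δ)) (hcomm' τ)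
    left_inv := fun σ => by
      ext x
      exact congrArg Subtype.val (show δ (δ.symm (σ (δ (δ.symm x)))) = σ x by
        rw [RingEquiv.apply_symm_apply, RingEquiv.apply_symm_apply])
    right_inv := fun τ => by
      ext x
      exact congrArg Subtype.val (show δ.symm (δ (τ (δ.symm (δ x)))) = τ x by
        rw [RingEquiv.symm_apply_apply, RingEquiv.symm_apply_apply])
    map_mul' := fun σ σ' => by
      ext x
      exact congrArg Subtype.val
        (show δ.symm ((σ * σ') (δ x)) = δ.symm (σ (δ (δ.symm (σ' (δ x))))) by
          rw [RingEquiv.apply_symm_apply]; rfl) }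
  have hψ : ∀ (σ : ↥l ≃ₐ[k] ↥l) (x : ↥(composLn p n k kalg l)),
      δ ((ψ σ) x) = σ (δ x) := fun σ x => by
    show δ (δ.symm (σ (δ x))) = σ (δ x)
    rw [RingEquiv.apply_symm_apply]
  refine ⟨δ, hδ1, ?_, frob_sup_eq p n k kalg l, (composLn_isGalois p n k kalg l).1,
    (composLn_isGalois p n k kalg l).2, ψ, hψ, ψ.symm, ?_, fun σ => ψ.symm_apply_apply σ⟩
  · intro x
    rw [hδ1, ← mem_pRoots]
  · intro τ x hx
    set σ := ψ.symm τ with hσ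
    have hτ : ψ σ = τ := ψ.apply_symm_apply τ
    have := hψ σ ⟨(x : kalg), hx⟩
    rw [hτ] at this
    -- this : δ (τ ⟨x, hx⟩) = σ (δ ⟨x, hx⟩)
    have hδx : δ (⟨(x : kalg), hx⟩ : ↥(composLn p n k kalg l)) = x ^ p ^ n := by
      apply Subtype.ext
      rw [hδ1]
      push_cast
      rfl
    apply hinj
    calc ((σ x : ↥l) : kalg) ^ p ^ n = ((σ x ^ p ^ n : ↥l) : kalg) := by push_cast; ring
      _ = ((σ (x ^ p ^ n) : ↥l) : kalg) := by rw [map_pow]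
      _ = ((δ (τ ⟨(x : kalg), hx⟩) : ↥l) : kalg) := by rw [this, hδx]
      _ = ((τ ⟨(x : kalg), hx⟩ : ↥(composLn p n k kalg l)) : kalg) ^ p ^ n := by rw [hδ1]
end
end
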